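/- Let k < 0 be an integer. If u is holomorphic on the open unit disk, continuous on the closed disk, and u(e^{it}) ∈ e^{ikt}·ℝ for all t ∈ ℝ, then u ≡ 0. -/

import Mathlib

open Complex

/-- One-dimensional Riemann–Hilbert problem with boundary condition of negative
Maslov index `2k < 0`: a function holomorphic on the open unit disk, continuous
on its closure, with `u(e^{it}) ∈ e^{ikt}·ℝ` for all `t`, vanishes identically. -/
theorem rh_problem_negative_index (k : ℤ) (hk : k < 0) (u : ℂ → ℂ)
    (hd : DifferentiableOn ℂ u (Metric.ball 0 1))
    (hc : ContinuousOn u (Metric.closedBall 0 1))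
    (hb : ∀ t : ℝ, ∃ r : ℝ, u (Complex.exp (t * I)) = Complex.exp ((k : ℂ) * t * I) * r) :
    ∀ z ∈ Metric.closedBall (0 : ℂ) 1, u z = 0 := by
  set m : ℕ := (-k).toNat with hm
  have hmk : (m : ℤ) = -k := Int.toNat_of_nonneg (by omega)
  have hm1 : 1 ≤ m := by omega
  set g : ℂ → ℂ := fun z => z ^ m * u z with hg
  have hclos : closure (Metric.ball (0:ℂ) 1) = Metric.closedBall 0 1 :=
    closure_ball 0 one_ne_zero
  have hgd : DiffContOnCl ℂ g (Metric.ball 0 1) := by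
    constructor
    · exact (differentiableOn_pow m).mul hd
    · rw [hclos]
      exact ((continuousOn_pow m (s := Metric.closedBall (0:ℂ) 1))).mul hc
  -- g is real on the boundary circle
  have hreal : ∀ z ∈ frontier (Metric.ball (0:ℂ) 1), ∃ r : ℝ, g z = r := by
    intro z hz
    rw [frontier_ball 0 one_ne_zero, mem_sphere_zero_iff_norm] at hz
    have habs : ‖z‖ = 1 := hz
    have hzeq : z = Complex.exp (z.arg * I) := by
      conv_lhs => rw [← Complex.norm_mul_exp_arg_mul_I z]
      rw [habs]; simp
    obtain ⟨r, hr⟩ := hb z.arg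
    refine ⟨r, ?_⟩
    have hpow : z ^ m = Complex.exp ((m : ℂ) * (z.arg * I)) := by
      rw [Complex.exp_nat_mul, ← hzeq]
    rw [hg]
    simp only
    rw [hpow, hzeq, hr, ← hzeq]
    have : ((m : ℂ)) = -(k : ℂ) := by
      exact_mod_cast hmk
    rw [this, ← mul_assoc, ← Complex.exp_add]
    ring_nf
    simp
  -- Im g = 0 on the closed ball via maximum modulus applied to exp(±I g)
  have him : ∀ z ∈ Metric.closedBall (0:ℂ) 1, (g z).im = 0 := by
    intro z hz
    have hz' : z ∈ closure (Metric.ball (0:ℂ) 1) := by rw [hclos]; exact hz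
    have hd1 : DiffContOnCl ℂ (fun w => Complex.exp (I * g w)) (Metric.ball 0 1) :=
      ⟨(hgd.differentiableOn.const_mul I).cexp,
        ((hgd.continuousOn.const_smul I).cexp : ContinuousOn _ _)⟩
    have hd2 : DiffContOnCl ℂ (fun w => Complex.exp (-I * g w)) (Metric.ball 0 1) :=
      ⟨(hgd.differentiableOn.const_mul (-I)).cexp,
        ((hgd.continuousOn.const_smul (-I)).cexp : ContinuousOn _ _)⟩
    have h1 : ‖Complex.exp (I * g z)‖ ≤ 1 := by
      refine Complex.norm_le_of_forall_mem_frontier_norm_le Metric.isBounded_ball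
        hd1 (fun w hw => ?_) hz'
      obtain ⟨r, hr⟩ := hreal w hw
      simp [hr, Complex.norm_exp]
    have h2 : ‖Complex.exp (-I * g z)‖ ≤ 1 := by
      refine Complex.norm_le_of_forall_mem_frontier_norm_le Metric.isBounded_ball
        hd2 (fun w hw => ?_) hz'
      obtain ⟨r, hr⟩ := hreal w hw
      simp [hr, Complex.norm_exp]
    rw [Complex.norm_exp] at h1 h2
    simp only [mul_re, I_re, I_im, neg_re, neg_im] at h1 h2
    have e1 : Real.exp (-(g z).im) ≤ 1 := by simpa using h1
    have e2 : Real.exp ((g z).im) ≤ 1 := by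
      convert h2 using 2; ring
    rw [Real.exp_le_one_iff] at e1 e2
    linarith
  -- g is constant on the ball (open mapping theorem), hence g = g 0 = 0
  have hga : AnalyticOnNhd ℂ g (Metric.ball (0:ℂ) 1) :=
    (hgd.differentiableOn.analyticOnNhd Metric.isOpen_ball)
  have hgz : ∀ z ∈ Metric.ball (0:ℂ) 1, g z = 0 := by
    rcases hga.is_constant_or_isOpen (convex_ball 0 1).isPreconnected with ⟨w, hw⟩ | hopen
    · intro z hz
      have h0 : g 0 = w := hw 0 (by simp)
      have hg0 : g 0 = 0 := by
        simp [hg, zero_pow (by omega : m ≠ 0)]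
      rw [hw z hz, ← h0, hg0]
    · exfalso
      have hop : IsOpen (g '' Metric.ball 0 1) :=
        hopen _ le_rfl Metric.isOpen_ball
      have hmem : g 0 ∈ g '' Metric.ball 0 1 := ⟨0, by simp, rfl⟩
      obtain ⟨ε, hε, hball⟩ := Metric.isOpen_iff.1 hop _ hmem
      have : g 0 + (↑(ε/2) : ℂ) * I ∈ g '' Metric.ball 0 1 := by
        apply hball
        simp only [Metric.mem_ball, dist_eq, add_sub_cancel_left]
        rw [norm_mul, Complex.norm_I, mul_one, Complex.norm_real, Real.norm_eq_abs]
        rw [abs_of_pos (by linarith)]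
        linarith
      obtain ⟨z, hz, hzeq⟩ := this
      have h1 : (g z).im = 0 := him z (Metric.ball_subset_closedBall hz)
      have h2 : (g 0).im = 0 := him 0 (by simp)
      rw [hzeq] at h1
      simp only [add_im, mul_im, ofReal_re, I_im, ofReal_im, I_re] at h1
      rw [h2] at h1
      simp at h1
      linarith
  -- hence u = 0 on ball \ {0}
  have hu0 : Set.EqOn u 0 (Metric.ball (0:ℂ) 1 \ {0}) := by
    intro z ⟨hz, hz0⟩
    have := hgz z hz
    simp only [hg] at this
    have hzm : z ^ m ≠ 0 := pow_ne_zero m (by simpa using hz0)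
    simpa [hzm] using this
  -- closure of the punctured ball is the closed ball
  have hcl : Metric.closedBall (0:ℂ) 1 ⊆ closure (Metric.ball (0:ℂ) 1 \ {0}) := by
    have h0 : (0:ℂ) ∈ closure (Metric.ball (0:ℂ) 1 \ {0}) := by
      rw [Metric.mem_closure_iff]
      intro ε hε
      refine ⟨((min ε 1 / 2 : ℝ) : ℂ), ⟨?_, ?_⟩, ?_⟩
      · simp only [Metric.mem_ball, dist_zero_right]
        rw [Complex.norm_real, Real.norm_eq_abs]
        rw [abs_of_pos (by positivity)]
        have := min_le_right ε 1
        linarith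
      · simp only [Set.mem_singleton_iff]
        intro h
        have : (min ε 1)/2 = (0:ℝ) := by exact_mod_cast h
        have := lt_min hε one_pos
        linarith
      · rw [dist_comm, dist_zero_right, Complex.norm_real, Real.norm_eq_abs,
          abs_of_pos (by positivity)]
        have := min_le_left ε 1
        linarith
    have hball : Metric.ball (0:ℂ) 1 ⊆ closure (Metric.ball (0:ℂ) 1 \ {0}) := by
      intro z hz
      by_cases h : z = 0
      · exact h ▸ h0
      · exact subset_closure ⟨hz, h⟩
    calc Metric.closedBall (0:ℂ) 1 = closure (Metric.ball (0:ℂ) 1) := hclos.symm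
      _ ⊆ closure (closure (Metric.ball (0:ℂ) 1 \ {0})) := closure_mono hball
      _ = closure (Metric.ball (0:ℂ) 1 \ {0}) := closure_closure
  intro z hz
  have hsub : closure (Metric.ball (0:ℂ) 1 \ {0}) ⊆ Metric.closedBall 0 1 := by
    rw [← hclos]
    exact closure_mono Set.diff_subset
  have := hu0.of_subset_closure hc continuousOn_const
    (fun w hw => Metric.ball_subset_closedBall hw.1) hcl
  exact this hz
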